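/- Let ε > 0, let F : ℝ^d → ℝ be C¹, let Σ ⊂ ℝ^d be bounded and open, and let ∂Σ = Γ_A ∪ Γ_B with Γ_A, Γ_B disjoint closed sets. Suppose: (i) h⁰ is C² in Σ and continuous on its closure, with L_ε h⁰ = 0 in Σ, h⁰ = 1 on Γ_A, h⁰ = 0 on Γ_B, and h⁰ > 0 in Σ; (ii) w⁰ is C² in Σ and continuous on the closure, with L_ε w⁰ = h⁰ in Σ and w⁰ = 0 on ∂Σ; (iii) for some λ ≥ 0, h^λ is C² in Σ and continuous on the closure, with L_ε h^λ = λ·h^λ in Σ, h^λ = 1 on Γ_A, h^λ = 0 on Γ_B, and h^λ ≥ 0 in Σ. Assume s := sup_Σ (w⁰/h⁰) < ∞, sup_Σ (h^λ/h⁰) < ∞, and λ·s ≤ 1/2. Then h^λ(x) ≤ (1 + 2λs)·h⁰(x) for every x ∈ Σ. -/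

import Mathlib

open Metric Set

/-- The Euclidean Laplacian of `u` at `x`. -/
noncomputable def laplacian {d : ℕ} (u : EuclideanSpace ℝ (Fin d) → ℝ)
    (x : EuclideanSpace ℝ (Fin d)) : ℝ :=
  ∑ i : Fin d, iteratedFDeriv ℝ 2 u x ![EuclideanSpace.single i 1, EuclideanSpace.single i 1]

/-- The operator `L_ε u = -ε Δu + ⟨∇F, ∇u⟩`. -/
noncomputable def Lop {d : ℕ} (ε : ℝ) (F u : EuclideanSpace ℝ (Fin d) → ℝ)
    (x : EuclideanSpace ℝ (Fin d)) : ℝ :=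
  -ε * laplacian u x + inner ℝ (gradient F x) (gradient u x)

variable {d : ℕ}

local notation "E" => EuclideanSpace ℝ (Fin d)

lemma snd_dir {u : E → ℝ} {S : Set E} (hS : IsOpen S) {x₀ : E} (hx : x₀ ∈ S)
    (hu : ContDiffOn ℝ 2 u S) (hmin : IsLocalMin u x₀) (v : E) :
    0 ≤ fderiv ℝ (fderiv ℝ u) x₀ v v := by
  by_contra hcon
  push_neg at hcon
  set c := fderiv ℝ (fderiv ℝ u) x₀ v v with hcdef
  have hnb : S ∈ nhds x₀ := hS.mem_nhds hx
  have hu2 : ContDiffAt ℝ 2 u x₀ := hu.contDiffAt hnb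
  have hder : ∀ y ∈ S, HasFDerivAt u (fderiv ℝ u y) y := fun y hy =>
    ((hu.contDiffAt (hS.mem_nhds hy)).differentiableAt (by norm_num)).hasFDerivAt
  have hfd' : DifferentiableAt ℝ (fderiv ℝ u) x₀ :=
    (hu2.fderiv_right (m := 1) (by norm_num)).differentiableAt one_ne_zero
  set l : ℝ → E := fun t => x₀ + t • v with hldef
  have hl : ∀ t : ℝ, HasDerivAt l v t := by
    intro t
    simpa [hldef] using ((hasDerivAt_id t).smul_const v).const_add x₀
  have hl0 : l 0 = x₀ := by simp [hldef]
  have hlt : Filter.Tendsto l (nhds 0) (nhds x₀) := by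
    have := (hl 0).continuousAt.tendsto
    rwa [hl0] at this
  set h : ℝ → ℝ := fun t => fderiv ℝ u (l t) v with hhdef
  have hh : HasDerivAt h c 0 := by
    have hfd0 : HasFDerivAt (fderiv ℝ u) (fderiv ℝ (fderiv ℝ u) x₀) (l 0) :=
      hl0 ▸ hfd'.hasFDerivAt
    have h1 : HasDerivAt (fun t => fderiv ℝ u (l t)) (fderiv ℝ (fderiv ℝ u) x₀ v) 0 :=
      hfd0.comp_hasDerivAt 0 (hl 0)
    have h2 := ((ContinuousLinearMap.apply ℝ ℝ v).hasFDerivAt).comp_hasDerivAt 0 h1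
    exact h2
  have h00 : h 0 = 0 := by
    have hz : fderiv ℝ u x₀ = 0 := hmin.fderiv_eq_zero
    simp [hhdef, hl0, hz]
  have hneg : ∀ᶠ t in nhdsWithin (0:ℝ) (Ioi 0), h t < 0 := by
    have hslope := hasDerivAt_iff_tendsto_slope.mp hh
    have h3 : ∀ᶠ t in nhdsWithin (0:ℝ) {(0:ℝ)}ᶜ, slope h 0 t < 0 :=
      hslope.eventually_lt_const hcon
    have h4 : nhdsWithin (0:ℝ) (Ioi 0) ≤ nhdsWithin (0:ℝ) {(0:ℝ)}ᶜ :=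
      nhdsWithin_mono 0 (fun t ht => ne_of_gt ht)
    filter_upwards [h4 h3, self_mem_nhdsWithin] with t ht1 ht2
    have hslt : h t / t < 0 := by
      simpa [slope_def_field, h00] using ht1
    have := mul_neg_of_neg_of_pos hslt (show (0:ℝ) < t from ht2)
    rwa [div_mul_cancel₀ _ (ne_of_gt (show (0:ℝ) < t from ht2))] at this
  have hming : ∀ᶠ t in nhds (0:ℝ), u x₀ ≤ u (l t) := hlt.eventually hmin
  have hevS : ∀ᶠ t in nhds (0:ℝ), l t ∈ S := hlt.eventually_mem hnb
  have hneg' : ∀ᶠ t in nhds (0:ℝ), t ∈ Ioi (0:ℝ) → h t < 0 :=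
    eventually_nhdsWithin_iff.mp hneg
  obtain ⟨δ₁, hδ₁pos, hδ₁⟩ := Metric.eventually_nhds_iff.mp ((hevS.and hming).and hneg')
  set δ := δ₁ / 2 with hδdef
  have hδpos : 0 < δ := by positivity
  have hδlt : δ < δ₁ := by simp [hδdef]; linarith
  have hball : ∀ t ∈ Icc (0:ℝ) δ, dist t (0:ℝ) < δ₁ := by
    intro t ht
    rw [Real.dist_eq, sub_zero, abs_of_nonneg ht.1]
    linarith [ht.2]
  have hgd : ∀ t ∈ Icc (0:ℝ) δ, HasDerivAt (fun t => u (l t)) (h t) t := by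
    intro t ht
    have hin : l t ∈ S := ((hδ₁ (hball t ht)).1).1
    have := (hder (l t) hin).comp_hasDerivAt t (hl t)
    exact this
  have hcont : ContinuousOn (fun t => u (l t)) (Icc (0:ℝ) δ) :=
    fun t ht => ((hgd t ht).continuousAt).continuousWithinAt
  have hanti : StrictAntiOn (fun t => u (l t)) (Icc (0:ℝ) δ) := by
    apply strictAntiOn_of_deriv_neg (convex_Icc 0 δ) hcont
    intro t ht
    rw [interior_Icc] at ht
    rw [(hgd t ⟨ht.1.le, ht.2.le⟩).deriv]
    exact (hδ₁ (hball t ⟨ht.1.le, ht.2.le⟩)).2 ht.1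
  have h5 : u (l δ) < u (l 0) :=
    hanti (left_mem_Icc.mpr hδpos.le) (right_mem_Icc.mpr hδpos.le) hδpos
  have h6 : u x₀ ≤ u (l δ) := ((hδ₁ (hball δ (right_mem_Icc.mpr hδpos.le))).1).2
  rw [hl0] at h5
  linarith

lemma laplacian_eq (u : E → ℝ) (x : E) :
    laplacian u x = ∑ i : Fin d, fderiv ℝ (fderiv ℝ u) x
      (EuclideanSpace.single i 1) (EuclideanSpace.single i 1) := by
  unfold laplacian
  refine Finset.sum_congr rfl fun i _ => ?_
  rw [iteratedFDeriv_two_apply]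
  simp

lemma min_principle {ε : ℝ} (hε : 0 < ε) (F : E → ℝ) {S : Set E}
    (hSbd : Bornology.IsBounded S) (hSopen : IsOpen S) {u : E → ℝ}
    (hu2 : ContDiffOn ℝ 2 u S) (huc : ContinuousOn u (closure S))
    (hLu : ∀ x ∈ S, 0 < Lop ε F u x) (hubd : ∀ x ∈ frontier S, 0 ≤ u x) :
    ∀ x ∈ S, 0 ≤ u x := by
  intro x hx
  have hcpt : IsCompact (closure S) := hSbd.isCompact_closure
  have hne : (closure S).Nonempty := ⟨x, subset_closure hx⟩
  obtain ⟨x₀, hx₀, hminon⟩ := hcpt.exists_isMinOn hne huc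
  have hkey : 0 ≤ u x₀ := by
    by_cases hx₀S : x₀ ∈ S
    · exfalso
      have hmin : IsLocalMin u x₀ :=
        hminon.isLocalMin (Filter.mem_of_superset (hSopen.mem_nhds hx₀S) subset_closure)
      have hlap : 0 ≤ laplacian u x₀ := by
        rw [laplacian_eq]
        exact Finset.sum_nonneg fun i _ => snd_dir hSopen hx₀S hu2 hmin _
      have hgrad : gradient u x₀ = 0 := by
        unfold gradient
        rw [hmin.fderiv_eq_zero]
        simp
      have hpos := hLu x₀ hx₀S
      unfold Lop at hpos
      rw [hgrad, inner_zero_right] at hpos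
      nlinarith [mul_nonneg hε.le hlap]
    · exact hubd x₀ (hSopen.frontier_eq ▸ ⟨hx₀, hx₀S⟩)
  exact le_trans hkey (isMinOn_iff.mp hminon x (subset_closure hx))

lemma Lop_comb (ε : ℝ) (F : E → ℝ) {S : Set E} (hSopen : IsOpen S)
    {f g h : E → ℝ} (hf : ContDiffOn ℝ 2 f S) (hg : ContDiffOn ℝ 2 g S)
    (hh : ContDiffOn ℝ 2 h S) (c : ℝ) {x : E} (hx : x ∈ S) :
    Lop ε F (fun y => f y + c * g y - h y) x
      = Lop ε F f x + c * Lop ε F g x - Lop ε F h x := by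
  have hfd : ∀ {u : E → ℝ}, ContDiffOn ℝ 2 u S → ∀ y ∈ S, DifferentiableAt ℝ u y :=
    fun {u} hu y hy => (hu.contDiffAt (hSopen.mem_nhds hy)).differentiableAt (by norm_num)
  have hfd2 : ∀ {u : E → ℝ}, ContDiffOn ℝ 2 u S → DifferentiableAt ℝ (fderiv ℝ u) x :=
    fun {u} hu => (((hu.contDiffAt (hSopen.mem_nhds hx)).fderiv_right (m := 1)
      (by norm_num)).differentiableAt one_ne_zero)
  have hev : fderiv ℝ (fun y => f y + c * g y - h y)
      =ᶠ[nhds x] fun y => fderiv ℝ f y + c • fderiv ℝ g y - fderiv ℝ h y := by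
    filter_upwards [hSopen.mem_nhds hx] with y hy
    rw [fderiv_fun_sub ((hfd hf y hy).fun_add ((hfd hg y hy).const_mul c)) (hfd hh y hy),
      fderiv_fun_add (hfd hf y hy) ((hfd hg y hy).const_mul c), fderiv_const_mul (hfd hg y hy)]
  have hD1 : fderiv ℝ (fun y => f y + c * g y - h y) x
      = fderiv ℝ f x + c • fderiv ℝ g x - fderiv ℝ h x := by
    rw [fderiv_fun_sub ((hfd hf x hx).fun_add ((hfd hg x hx).const_mul c)) (hfd hh x hx),
      fderiv_fun_add (hfd hf x hx) ((hfd hg x hx).const_mul c), fderiv_const_mul (hfd hg x hx)]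
  have hD2 : fderiv ℝ (fderiv ℝ (fun y => f y + c * g y - h y)) x
      = fderiv ℝ (fderiv ℝ f) x + c • fderiv ℝ (fderiv ℝ g) x - fderiv ℝ (fderiv ℝ h) x := by
    rw [hev.fderiv_eq]
    rw [fderiv_fun_sub ((hfd2 hf).fun_add ((hfd2 hg).fun_const_smul c)) (hfd2 hh),
      fderiv_fun_add (hfd2 hf) ((hfd2 hg).fun_const_smul c), fderiv_fun_const_smul (hfd2 hg)]
  have hlap : laplacian (fun y => f y + c * g y - h y) x
      = laplacian f x + c * laplacian g x - laplacian h x := by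
    rw [laplacian_eq, laplacian_eq, laplacian_eq, laplacian_eq, hD2]
    simp only [ContinuousLinearMap.sub_apply, ContinuousLinearMap.add_apply,
      ContinuousLinearMap.smul_apply, smul_eq_mul, Finset.sum_sub_distrib,
      Finset.sum_add_distrib, Finset.mul_sum]
  have hgr : gradient (fun y => f y + c * g y - h y) x
      = gradient f x + c • gradient g x - gradient h x := by
    unfold gradient
    rw [hD1]
    simp [map_add, map_sub, map_smul]
  unfold Lop
  rw [hlap, hgr, inner_sub_right, inner_add_right, real_inner_smul_right]
  ring

/-- comparison of the resolvent equilibrium potential `h^λ` with the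
harmonic equilibrium potential `h⁰` (display (3.4) in the proof of Lemma 3.1). -/
theorem stmt_7 {d : ℕ} (ε : ℝ) (hε : 0 < ε)
    (F : EuclideanSpace ℝ (Fin d) → ℝ) (hF : ContDiff ℝ 1 F)
    (S : Set (EuclideanSpace ℝ (Fin d)))
    (hSbd : Bornology.IsBounded S) (hSopen : IsOpen S)
    (ΓA ΓB : Set (EuclideanSpace ℝ (Fin d)))
    (hA : IsClosed ΓA) (hB : IsClosed ΓB) (hAB : Disjoint ΓA ΓB)
    (hbdry : frontier S = ΓA ∪ ΓB)
    (h0 w0 hl : EuclideanSpace ℝ (Fin d) → ℝ) (lam : ℝ) (hlam : 0 ≤ lam)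
    -- (i)
    (hh02 : ContDiffOn ℝ 2 h0 S) (hh0c : ContinuousOn h0 (closure S))
    (hh0eq : ∀ x ∈ S, Lop ε F h0 x = 0)
    (hh0A : ∀ x ∈ ΓA, h0 x = 1) (hh0B : ∀ x ∈ ΓB, h0 x = 0)
    (hh0pos : ∀ x ∈ S, 0 < h0 x)
    -- (ii)
    (hw02 : ContDiffOn ℝ 2 w0 S) (hw0c : ContinuousOn w0 (closure S))
    (hw0eq : ∀ x ∈ S, Lop ε F w0 x = h0 x)
    (hw0bd : ∀ x ∈ frontier S, w0 x = 0)
    -- (iii)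
    (hhl2 : ContDiffOn ℝ 2 hl S) (hhlc : ContinuousOn hl (closure S))
    (hhleq : ∀ x ∈ S, Lop ε F hl x = lam * hl x)
    (hhlA : ∀ x ∈ ΓA, hl x = 1) (hhlB : ∀ x ∈ ΓB, hl x = 0)
    (hhlnn : ∀ x ∈ S, 0 ≤ hl x)
    -- finiteness and smallness
    (hsfin : BddAbove ((fun x => w0 x / h0 x) '' S))
    (hratfin : BddAbove ((fun x => hl x / h0 x) '' S))
    (hsmall : lam * sSup ((fun x => w0 x / h0 x) '' S) ≤ 1 / 2) :
    ∀ x ∈ S, hl x ≤ (1 + 2 * lam * sSup ((fun x => w0 x / h0 x) '' S)) * h0 x := by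
  intro x hx
  set s := sSup ((fun x => w0 x / h0 x) '' S) with hsdef
  set r := sSup ((fun x => hl x / h0 x) '' S) with hrdef
  -- w0 is nonnegative on S by the strict minimum principle
  have hw0nn : ∀ y ∈ S, 0 ≤ w0 y :=
    min_principle hε F hSbd hSopen hw02 hw0c
      (fun y hy => by rw [hw0eq y hy]; exact hh0pos y hy)
      (fun y hy => (hw0bd y hy).ge)
  have hsge : ∀ y ∈ S, w0 y / h0 y ≤ s := fun y hy => le_csSup hsfin ⟨y, hy, rfl⟩
  have hrge : ∀ y ∈ S, hl y / h0 y ≤ r := fun y hy => le_csSup hratfin ⟨y, hy, rfl⟩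
  have hs0 : 0 ≤ s :=
    le_trans (div_nonneg (hw0nn x hx) (hh0pos x hx).le) (hsge x hx)
  have hr0 : 0 ≤ r :=
    le_trans (div_nonneg (hhlnn x hx) (hh0pos x hx).le) (hrge x hx)
  -- key comparison with a strictness margin η
  have hstep : ∀ η : ℝ, 0 < η → ∀ y ∈ S, hl y ≤ h0 y + (lam * r + η) * w0 y := by
    intro η hη y hy
    have hφ2 : ContDiffOn ℝ 2 (fun y => h0 y + (lam * r + η) * w0 y - hl y) S :=
      (hh02.add (contDiffOn_const.mul hw02)).sub hhl2
    have hφc : ContinuousOn (fun y => h0 y + (lam * r + η) * w0 y - hl y) (closure S) :=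
      (hh0c.add (continuousOn_const.mul hw0c)).sub hhlc
    have hφL : ∀ z ∈ S, 0 < Lop ε F (fun y => h0 y + (lam * r + η) * w0 y - hl y) z := by
      intro z hz
      rw [Lop_comb ε F hSopen hh02 hw02 hhl2 (lam * r + η) hz,
        hh0eq z hz, hw0eq z hz, hhleq z hz]
      have h1 : hl z ≤ r * h0 z := (div_le_iff₀ (hh0pos z hz)).mp (hrge z hz)
      nlinarith [hh0pos z hz, mul_le_mul_of_nonneg_left h1 hlam, mul_pos hη (hh0pos z hz)]
    have hφbd : ∀ z ∈ frontier S, 0 ≤ (fun y => h0 y + (lam * r + η) * w0 y - hl y) z := by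
      intro z hz
      have hw0z : w0 z = 0 := hw0bd z hz
      rw [hbdry] at hz
      rcases hz with hz | hz
      · simp [hh0A z hz, hhlA z hz, hw0z]
      · simp [hh0B z hz, hhlB z hz, hw0z]
    have := min_principle hε F hSbd hSopen hφ2 hφc hφL hφbd y hy
    linarith
  -- remove the margin
  have hstep' : ∀ y ∈ S, hl y ≤ h0 y + lam * r * w0 y := by
    intro y hy
    rcases eq_or_lt_of_le (hw0nn y hy) with hB | hB
    · have := hstep 1 one_pos y hy
      rw [← hB] at this ⊢
      linarith
    · refine le_of_forall_pos_le_add fun η hη => ?_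
      have := hstep (η / w0 y) (div_pos hη hB) y hy
      have hcan : η / w0 y * w0 y = η := div_mul_cancel₀ η (ne_of_gt hB)
      nlinarith
  -- bound the ratio sup
  have hrbound : r ≤ 1 + lam * s * r := by
    rw [hrdef]
    refine csSup_le ⟨_, ⟨x, hx, rfl⟩⟩ ?_
    rintro b ⟨y, hy, rfl⟩
    simp only
    rw [div_le_iff₀ (hh0pos y hy)]
    have hw : w0 y ≤ s * h0 y := (div_le_iff₀ (hh0pos y hy)).mp (hsge y hy)
    have hlr : 0 ≤ lam * r := mul_nonneg hlam hr0
    nlinarith [hstep' y hy, mul_le_mul_of_nonneg_left hw hlr]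
  have hfinal : r ≤ 1 + 2 * lam * s := by
    have ht0 : 0 ≤ lam * s := mul_nonneg hlam hs0
    nlinarith [hrbound, hsmall, ht0, mul_nonneg ht0 (by linarith : (0:ℝ) ≤ 1 - 2 * (lam * s))]
  have := le_trans (hrge x hx) hfinal
  rw [div_le_iff₀ (hh0pos x hx)] at this
  calc hl x ≤ (1 + 2 * lam * s) * h0 x := this
    _ = (1 + 2 * lam * s) * h0 x := by ring
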